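/- For α > 0 let H(t) = αt/(α² + t²), q = -1 - H'/H² and j = -2 - 3q + H''/H³. Then for every t ≠ 0 the jerk and deceleration parameters satisfy the cosmographic constraint j(t) = ((α - 2)/α²)·(2 - α(2 + 3q(t))). -/

import Mathlib

lemma bounce_den_ne (α : ℝ) (hα : 0 < α) (t : ℝ) : α^2 + t^2 ≠ 0 := by positivity

lemma bounce_deriv1 (α : ℝ) (hα : 0 < α) :
    deriv (fun t : ℝ => α * t / (α^2 + t^2)) =
      fun t : ℝ => α * (α^2 - t^2) / (α^2 + t^2)^2 := by
  funext t
  have h1 : HasDerivAt (fun t : ℝ => α * t) α t := by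
    simpa using (hasDerivAt_id t).const_mul α
  have h2 : HasDerivAt (fun t : ℝ => α^2 + t^2) (2 * t) t := by
    simpa using ((hasDerivAt_pow 2 t).const_add (α^2))
  have h := (h1.div h2 (bounce_den_ne α hα t))
  change HasDerivAt (fun t : ℝ => α * t / (α^2 + t^2)) _ t at h
  rw [h.deriv]
  field_simp
  ring

lemma bounce_deriv2 (α : ℝ) (hα : 0 < α) (t : ℝ) :
    deriv (deriv (fun t : ℝ => α * t / (α^2 + t^2))) t =
      -2 * α * t * (3 * α^2 - t^2) / (α^2 + t^2)^3 := by
  rw [bounce_deriv1 α hα]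
  have h1 : HasDerivAt (fun t : ℝ => α * (α^2 - t^2)) (α * (-(2*t))) t := by
    have : HasDerivAt (fun t : ℝ => α^2 - t^2) (-(2*t)) t := by
      simpa using ((hasDerivAt_pow 2 t).const_sub (α^2))
    simpa using this.const_mul α
  have h2 : HasDerivAt (fun t : ℝ => (α^2 + t^2)^2) (2 * (α^2+t^2) * (2*t)) t := by
    have hb : HasDerivAt (fun t : ℝ => α^2 + t^2) (2 * t) t := by
      simpa using ((hasDerivAt_pow 2 t).const_add (α^2))
    have := hb.pow 2
    change HasDerivAt (fun t : ℝ => (α^2 + t^2)^2) _ t at this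
    simpa [mul_comm, mul_assoc, mul_left_comm] using this
  have hne : (α^2 + t^2)^2 ≠ 0 := pow_ne_zero _ (bounce_den_ne α hα t)
  have h := h1.div h2 hne
  change HasDerivAt (fun t : ℝ => α * (α^2 - t^2) / (α^2 + t^2)^2) _ t at h
  rw [h.deriv]
  have hd := bounce_den_ne α hα t
  field_simp
  ring

/-- For the bounce ansatz `H(t) = αt/(α² + t²)` with `α > 0`, the deceleration
parameter `q = -1 - H'/H²` and jerk parameter `j = -2 - 3q + H''/H³` satisfy
the cosmographic constraint `j = ((α-2)/α²)·(2 - α(2 + 3q))` for all `t ≠ 0`. -/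
theorem bounce_ansatz_cosmographic_constraint (α : ℝ) (hα : 0 < α) :
    let H : ℝ → ℝ := fun t => α * t / (α^2 + t^2)
    let q : ℝ → ℝ := fun t => -1 - deriv H t / (H t)^2
    let j : ℝ → ℝ := fun t => -2 - 3 * q t + deriv (deriv H) t / (H t)^3
    ∀ t : ℝ, t ≠ 0 → j t = ((α - 2)/α^2) * (2 - α * (2 + 3 * q t)) := by
  intro H q j t ht
  have hd := bounce_den_ne α hα t
  have hα' := hα.ne'
  simp only [H, q, j, bounce_deriv2 α hα]
  simp only [bounce_deriv1 α hα]
  have hH : α * t / (α^2 + t^2) ≠ 0 := by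
    apply div_ne_zero (mul_ne_zero hα' ht) hd
  field_simp
  ring
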